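/- Let A = A^k_3(r) with 1 ≤ k ≤ 3 and r ≥ 2, and let X ∈ L(A) have dimension 1. Then X is modular in L(A) if and only if X = H_i ∩ H_j for some 1 ≤ i < j ≤ k (intersections of two coordinate hyperplanes among the first k). -/

import Mathlib

open Submodule

/-- The intersection lattice of the arrangement `A` with ambient space `Z`:
all subspaces of the form `Z ⊓ sInf S` for `S ⊆ A` (the empty intersection gives `Z`). -/
def ArrLatIn {V : Type*} [AddCommGroup V] [Module ℂ V] (Z : Submodule ℂ V)
    (A : Set (Submodule ℂ V)) : Set (Submodule ℂ V) :=
  {X | ∃ S ⊆ A, X = Z ⊓ sInf S}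

/-- `X` is a modular element of the lattice `ℒ` (ordered by reverse inclusion):
`X ∈ ℒ` and `X + Y ∈ ℒ` for every `Y ∈ ℒ`. -/
def ModularIn {V : Type*} [AddCommGroup V] [Module ℂ V]
    (ℒ : Set (Submodule ℂ V)) (X : Submodule ℂ V) : Prop :=
  X ∈ ℒ ∧ ∀ Y ∈ ℒ, X ⊔ Y ∈ ℒ

/-- The restriction of the arrangement `A` to the subspace `Z`:
the hyperplanes `Z ∩ H` for `H ∈ A` with `Z ⊄ H`. -/
def Restrict {V : Type*} [AddCommGroup V] [Module ℂ V]
    (A : Set (Submodule ℂ V)) (Z : Submodule ℂ V) : Set (Submodule ℂ V) :=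
  {W | ∃ H ∈ A, ¬ Z ≤ H ∧ W = Z ⊓ H}

/-- A (lattice of subspaces ordered by reverse inclusion) is supersolvable if it admits a
maximal chain `C 0 > C 1 > ... > C n` (top to bottom) consisting of modular elements. -/
def LatSupersolvable {V : Type*} [AddCommGroup V] [Module ℂ V]
    (ℒ : Set (Submodule ℂ V)) : Prop :=
  ∃ n, ∃ C : Fin (n + 1) → Submodule ℂ V,
    (∀ i, ModularIn ℒ (C i)) ∧
    (∀ W ∈ ℒ, W ≤ C 0) ∧
    (∀ W ∈ ℒ, C (Fin.last n) ≤ W) ∧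
    (∀ i : Fin n, C i.succ < C i.castSucc) ∧
    (∀ i : Fin n, ∀ W ∈ ℒ, ¬(C i.succ < W ∧ W < C i.castSucc))

/-- The product of two arrangements. -/
def ProdArr {V₁ V₂ : Type*} [AddCommGroup V₁] [Module ℂ V₁] [AddCommGroup V₂] [Module ℂ V₂]
    (A₁ : Set (Submodule ℂ V₁)) (A₂ : Set (Submodule ℂ V₂)) : Set (Submodule ℂ (V₁ × V₂)) :=
  ((fun H => H.prod (⊤ : Submodule ℂ V₂)) '' A₁) ∪
    ((fun H => (⊤ : Submodule ℂ V₁).prod H) '' A₂)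

/-- The coordinate hyperplane `ker x_i` in `ℂ^ℓ`. -/
noncomputable def coordH (ℓ : ℕ) (i : Fin ℓ) : Submodule ℂ (Fin ℓ → ℂ) :=
  LinearMap.ker (LinearMap.proj i : (Fin ℓ → ℂ) →ₗ[ℂ] ℂ)

/-- The hyperplane `ker (x_i - ζ x_j)` in `ℂ^ℓ`. -/
noncomputable def diffH (ℓ : ℕ) (i j : Fin ℓ) (ζ : ℂ) : Submodule ℂ (Fin ℓ → ℂ) :=
  LinearMap.ker ((LinearMap.proj i : (Fin ℓ → ℂ) →ₗ[ℂ] ℂ) - ζ • (LinearMap.proj j))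

/-- The intermediate arrangement `A^k_ℓ(r)`: the first `k` coordinate hyperplanes together with
all hyperplanes `ker (x_i - ζ x_j)` for `i < j` and `ζ` an `r`-th root of unity. -/
def interArr (r ℓ k : ℕ) : Set (Submodule ℂ (Fin ℓ → ℂ)) :=
  {H | ∃ i : Fin ℓ, (i : ℕ) < k ∧ H = coordH ℓ i} ∪
    {H | ∃ i j : Fin ℓ, i < j ∧ ∃ ζ : ℂ, ζ ^ r = 1 ∧ H = diffH ℓ i j ζ}

/-- The Boolean subarrangement `B^k_ℓ` of the first `k` coordinate hyperplanes of `ℂ^ℓ`. -/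
def boolArr (ℓ k : ℕ) : Set (Submodule ℂ (Fin ℓ → ℂ)) :=
  {H | ∃ i : Fin ℓ, (i : ℕ) < k ∧ H = coordH ℓ i}

/-- The degree-one polynomial corresponding to a linear form on `ℂ^n`. -/
noncomputable def linPoly {n : ℕ} (f : (Fin n → ℂ) →ₗ[ℂ] ℂ) : MvPolynomial (Fin n) ℂ :=
  ∑ i, MvPolynomial.C (f (Pi.single i 1)) * MvPolynomial.X i

/-- The module of derivations `D(Q) = {θ | θ(Q) ∈ Q·S}` is free with a homogeneous basis
`θ 0, ..., θ (n-1)` of polynomial degrees `e 0, ..., e (n-1)`. -/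
def IsFreeWithExponents (n : ℕ) (Q : MvPolynomial (Fin n) ℂ) (e : Fin n → ℕ) : Prop :=
  ∃ θ : Fin n → Derivation ℂ (MvPolynomial (Fin n) ℂ) (MvPolynomial (Fin n) ℂ),
    (∀ i, θ i Q ∈ Ideal.span {Q}) ∧
    (∀ i j, ((θ i) (MvPolynomial.X j)).IsHomogeneous (e i)) ∧
    (∀ c : Fin n → MvPolynomial (Fin n) ℂ, (∑ i, c i • θ i) = 0 → ∀ i, c i = 0) ∧
    (∀ η : Derivation ℂ (MvPolynomial (Fin n) ℂ) (MvPolynomial (Fin n) ℂ),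
      η Q ∈ Ideal.span {Q} →
      ∃ c : Fin n → MvPolynomial (Fin n) ℂ, η = ∑ i, c i • θ i)

/-- An arrangement is irreducible if it is not a product of two nonempty arrangements, i.e.
there is no nontrivial direct sum decomposition of the ambient space such that every
hyperplane contains one of the two summands. -/
def IsIrreducibleArr {V : Type*} [AddCommGroup V] [Module ℂ V]
    (A : Set (Submodule ℂ V)) : Prop :=
  ¬ ∃ V₁ V₂ : Submodule ℂ V, V₁ ≠ ⊥ ∧ V₂ ≠ ⊥ ∧ V₁ ⊓ V₂ = ⊥ ∧ V₁ ⊔ V₂ = ⊤ ∧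
      ∀ H ∈ A, V₁ ≤ H ∨ V₂ ≤ H

/-- The restriction of `A` to the hyperplane `H` is linearly isomorphic to the intermediate
arrangement `A^{k'}_{ℓ'}(r)`. -/
def RestrEquiv (r ℓ : ℕ) (A : Set (Submodule ℂ (Fin ℓ → ℂ))) (H : Submodule ℂ (Fin ℓ → ℂ))
    (ℓ' k' : ℕ) : Prop :=
  ∃ φ : (Fin ℓ' → ℂ) →ₗ[ℂ] (Fin ℓ → ℂ), Function.Injective φ ∧ LinearMap.range φ = H ∧
    Restrict A H = (fun K => Submodule.map φ K) '' interArr r ℓ' k'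
section Helpers

open Module

local notation "V3" => (Fin 3 → ℂ)

lemma mem_coordH (i : Fin 3) (x : V3) : x ∈ coordH 3 i ↔ x i = 0 := by
  simp [coordH, LinearMap.mem_ker]

lemma mem_diffH (i j : Fin 3) (ζ : ℂ) (x : V3) : x ∈ diffH 3 i j ζ ↔ x i = ζ * x j := by
  simp [diffH, LinearMap.mem_ker, sub_eq_zero]

lemma mem_span_ab1 (a b : ℂ) (x : V3) :
    x ∈ span ℂ {![a,b,1]} ↔ x 0 = a * x 2 ∧ x 1 = b * x 2 := by
  rw [Submodule.mem_span_singleton]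
  constructor
  · rintro ⟨s, rfl⟩
    simp [Pi.smul_apply]; constructor <;> ring
  · rintro ⟨h0, h1⟩
    refine ⟨x 2, funext fun i => ?_⟩
    fin_cases i <;> simp [h0, h1] <;> ring

lemma mem_span_a10 (a : ℂ) (x : V3) :
    x ∈ span ℂ {![a,1,0]} ↔ x 0 = a * x 1 ∧ x 2 = 0 := by
  rw [Submodule.mem_span_singleton]
  constructor
  · rintro ⟨s, rfl⟩
    simp [Pi.smul_apply]; ring
  · rintro ⟨h0, h1⟩
    refine ⟨x 1, funext fun i => ?_⟩
    fin_cases i <;> simp [h0, h1] <;> ring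

lemma mem_span_100 (x : V3) :
    x ∈ span ℂ {![1,0,0]} ↔ x 1 = 0 ∧ x 2 = 0 := by
  rw [Submodule.mem_span_singleton]
  constructor
  · rintro ⟨s, rfl⟩
    simp [Pi.smul_apply]
  · rintro ⟨h0, h1⟩
    refine ⟨x 0, funext fun i => ?_⟩
    fin_cases i <;> simp [h0, h1]

end Helpers
section Helpers2
open Module
local notation "V3" => (Fin 3 → ℂ)
variable {r k : ℕ}

lemma coordH_mem_A (i : Fin 3) (h : (i:ℕ) < k) : coordH 3 i ∈ interArr r 3 k :=
  Or.inl ⟨i, h, rfl⟩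

lemma diffH_mem_A {i j : Fin 3} (hij : i < j) {ζ : ℂ} (hζ : ζ ^ r = 1) :
    diffH 3 i j ζ ∈ interArr r 3 k :=
  Or.inr ⟨i, j, hij, ζ, hζ, rfl⟩

lemma mem_L_iff {X : Submodule ℂ V3} :
    X ∈ ArrLatIn ⊤ (interArr r 3 k) ↔ ∃ S ⊆ interArr r 3 k, X = sInf S := by
  simp only [ArrLatIn, Set.mem_setOf_eq, top_inf_eq]

lemma top_mem_L : (⊤ : Submodule ℂ V3) ∈ ArrLatIn ⊤ (interArr r 3 k) :=
  mem_L_iff.2 ⟨∅, by simp, by simp⟩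

lemma mem_L_of_A {H : Submodule ℂ V3} (h : H ∈ interArr r 3 k) :
    H ∈ ArrLatIn ⊤ (interArr r 3 k) :=
  mem_L_iff.2 ⟨{H}, by simpa, by simp⟩

lemma inf_mem_L {H H' : Submodule ℂ V3} (h : H ∈ interArr r 3 k) (h' : H' ∈ interArr r 3 k) :
    H ⊓ H' ∈ ArrLatIn ⊤ (interArr r 3 k) :=
  mem_L_iff.2 ⟨{H, H'}, by simp [Set.insert_subset_iff, h, h'], by simp⟩

lemma root_ne_zero {ζ : ℂ} (h : ζ ^ r = 1) (hr : 2 ≤ r) : ζ ≠ 0 := by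
  rintro rfl
  rw [zero_pow (by omega)] at h
  exact zero_ne_one h

-- span equalities with intersections of hyperplanes
lemma span_ab1_eq (a b : ℂ) : span ℂ {![a,b,1]} = diffH 3 0 2 a ⊓ diffH 3 1 2 b := by
  ext x
  simp [mem_span_ab1, mem_diffH, Submodule.mem_inf]

lemma span_0b1_eq (b : ℂ) : span ℂ {![0,b,1]} = coordH 3 0 ⊓ diffH 3 1 2 b := by
  ext x
  simp [mem_span_ab1, mem_coordH, mem_diffH, Submodule.mem_inf]

lemma span_b01_eq (b : ℂ) : span ℂ {![b,0,1]} = coordH 3 1 ⊓ diffH 3 0 2 b := by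
  ext x
  simp [mem_span_ab1, mem_coordH, mem_diffH, Submodule.mem_inf, and_comm]

lemma span_e0_eq {c c' : ℂ} (h : c ≠ c') :
    span ℂ {![1,0,0]} = diffH 3 1 2 c ⊓ diffH 3 1 2 c' := by
  ext x
  simp only [mem_span_100, Submodule.mem_inf, mem_diffH]
  constructor
  · rintro ⟨h1, h2⟩; simp [h1, h2]
  · rintro ⟨h1, h2⟩
    have hx2 : x 2 = 0 := by
      have : (c - c') * x 2 = 0 := by rw [sub_mul, ← h1, ← h2]; ring
      rcases mul_eq_zero.1 this with h0 | h0
      · exact absurd (sub_eq_zero.1 h0) h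
      · exact h0
    rw [hx2, mul_zero] at h1
    exact ⟨h1, hx2⟩

lemma span_e1_eq {c c' : ℂ} (h : c ≠ c') :
    span ℂ {![0,1,0]} = diffH 3 0 2 c ⊓ diffH 3 0 2 c' := by
  ext x
  simp only [mem_span_a10, Submodule.mem_inf, mem_diffH, zero_mul]
  constructor
  · rintro ⟨h1, h2⟩; simp [h1, h2]
  · rintro ⟨h1, h2⟩
    have hx2 : x 2 = 0 := by
      have : (c - c') * x 2 = 0 := by rw [sub_mul, ← h1, ← h2]; ring
      rcases mul_eq_zero.1 this with h0 | h0
      · exact absurd (sub_eq_zero.1 h0) h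
      · exact h0
    rw [hx2, mul_zero] at h1
    exact ⟨h1, hx2⟩

lemma span_e2_eq {c c' : ℂ} (h : c ≠ c') :
    span ℂ {![0,0,1]} = diffH 3 0 1 c ⊓ diffH 3 0 1 c' := by
  ext x
  simp only [mem_span_ab1, Submodule.mem_inf, mem_diffH, zero_mul]
  constructor
  · rintro ⟨h1, h2⟩; simp [h1, h2]
  · rintro ⟨h1, h2⟩
    have hx1 : x 1 = 0 := by
      have : (c - c') * x 1 = 0 := by rw [sub_mul, ← h1, ← h2]; ring
      rcases mul_eq_zero.1 this with h0 | h0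
      · exact absurd (sub_eq_zero.1 h0) h
      · exact h0
    rw [hx1, mul_zero] at h1
    exact ⟨h1, hx1⟩

-- axes as coordinate intersections
lemma axis2_eq : coordH 3 0 ⊓ coordH 3 1 = span ℂ {![0,0,1]} := by
  ext x; simp [mem_span_ab1, mem_coordH, Submodule.mem_inf]

lemma axis1_eq : coordH 3 0 ⊓ coordH 3 2 = span ℂ {![0,1,0]} := by
  ext x; simp [mem_span_a10, mem_coordH, Submodule.mem_inf, and_comm]

lemma axis0_eq : coordH 3 1 ⊓ coordH 3 2 = span ℂ {![1,0,0]} := by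
  ext x; simp [mem_span_100, mem_coordH, Submodule.mem_inf]

end Helpers2
section Helpers3
open Module
local notation "V3" => (Fin 3 → ℂ)
variable {r k : ℕ}

lemma finrank_V3 : finrank ℂ V3 = 3 := by simp

lemma finrank_coordH (i : Fin 3) : finrank ℂ (coordH 3 i) = 2 := by
  have h := LinearMap.finrank_range_add_finrank_ker
    (LinearMap.proj i : V3 →ₗ[ℂ] ℂ)
  have hsurj : Function.Surjective (LinearMap.proj i : V3 →ₗ[ℂ] ℂ) :=
    fun c => ⟨fun _ => c, rfl⟩
  rw [LinearMap.range_eq_top.2 hsurj] at h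
  simp only [finrank_top, finrank_V3, finrank_self] at h
  rw [show coordH 3 i = LinearMap.ker (LinearMap.proj i : V3 →ₗ[ℂ] ℂ) from rfl]; omega

lemma finrank_diffH {i j : Fin 3} (hij : i ≠ j) (ζ : ℂ) :
    finrank ℂ (diffH 3 i j ζ) = 2 := by
  set f : V3 →ₗ[ℂ] ℂ := (LinearMap.proj i : V3 →ₗ[ℂ] ℂ) - ζ • LinearMap.proj j with hf
  have h := LinearMap.finrank_range_add_finrank_ker f
  have hsurj : Function.Surjective f := by
    intro c
    refine ⟨Pi.single i c, ?_⟩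
    simp [hf, Pi.single_eq_of_ne (Ne.symm hij)]
  rw [LinearMap.range_eq_top.2 hsurj] at h
  simp only [finrank_top, finrank_V3, finrank_self] at h
  have hd : diffH 3 i j ζ = LinearMap.ker f := by rw [hf]; rfl
  rw [hd]; omega

lemma det_inf {v w : V3} {i j : Fin 3} (h : v i * w j ≠ v j * w i) :
    span ℂ {v} ⊓ span ℂ {w} = ⊥ := by
  rw [eq_bot_iff]
  rintro x ⟨hx1, hx2⟩
  obtain ⟨s, rfl⟩ := Submodule.mem_span_singleton.1 hx1
  obtain ⟨t, ht⟩ := Submodule.mem_span_singleton.1 hx2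
  have hi : t * w i = s * v i := congrFun ht i
  have hj : t * w j = s * v j := congrFun ht j
  have hs : s * (v i * w j) = s * (v j * w i) := by
    have h1 : (s * v i) * w j = (s * v j) * w i := by
      rw [← hi, ← hj]; ring
    calc s * (v i * w j) = (s * v i) * w j := by ring
      _ = (s * v j) * w i := h1
      _ = s * (v j * w i) := by ring
  have hs0 : s = 0 := by
    by_contra hs0
    exact h (mul_left_cancel₀ hs0 hs)
  simp [hs0]

lemma ne_zero_of_det {v w : V3} {i j : Fin 3} (h : v i * w j ≠ v j * w i) :
    v ≠ 0 := by
  rintro rfl; simp at h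

lemma sup_eq_hyp {v w : V3} {H : Submodule ℂ V3} {i j : Fin 3}
    (hv : v ∈ H) (hw : w ∈ H) (hH : finrank ℂ H = 2)
    (hdet : v i * w j ≠ v j * w i) :
    span ℂ {v} ⊔ span ℂ {w} = H := by
  have hv0 : v ≠ 0 := ne_zero_of_det hdet
  have hw0 : w ≠ 0 := by
    rintro rfl; simp at hdet
  have hle : span ℂ {v} ⊔ span ℂ {w} ≤ H :=
    sup_le ((Submodule.span_singleton_le_iff_mem _ _).2 hv)
      ((Submodule.span_singleton_le_iff_mem _ _).2 hw)
  refine Submodule.eq_of_le_of_finrank_le hle ?_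
  have hkey := Submodule.finrank_sup_add_finrank_inf_eq (span ℂ {v}) (span ℂ {w})
  rw [det_inf hdet, finrank_bot, finrank_span_singleton hv0,
    finrank_span_singleton hw0] at hkey
  omega

lemma sup_le_two (v w : V3) :
    finrank ℂ ((span ℂ {v} ⊔ span ℂ {w} : Submodule ℂ V3)) ≤ 2 := by
  have hkey := Submodule.finrank_sup_add_finrank_inf_eq (span ℂ {v}) (span ℂ {w})
  have h1 : finrank ℂ (span ℂ ({v} : Set V3)) ≤ 1 := by
    simpa using finrank_span_le_card ({v} : Set V3)
  have h2 : finrank ℂ (span ℂ ({w} : Set V3)) ≤ 1 := by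
    simpa using finrank_span_le_card ({w} : Set V3)
  omega
end Helpers3

section Classify
open Module
local notation "V3" => (Fin 3 → ℂ)
variable {r k : ℕ}

lemma key_core {S : Set (Submodule ℂ V3)} (hSA : S ⊆ interArr r 3 k) {w u : V3}
    (hw : sInf S = span ℂ {w})
    (hu : ∀ H ∈ interArr r 3 k, w ∈ H → u ∈ H) : u ∈ span ℂ {w} := by
  rw [← hw]
  exact Submodule.mem_sInf.2 fun H hH =>
    hu H (hSA hH) (sInf_le hH (hw ▸ Submodule.mem_span_singleton_self w))

lemma coordH_cases {k' : ℕ} {i : Fin 3} (hik : (i : ℕ) < k') {v u : V3}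
    (hv : v ∈ coordH 3 i)
    (h0 : 0 < k' → v 0 = 0 → u 0 = 0)
    (h1 : 1 < k' → v 1 = 0 → u 1 = 0)
    (h2 : 2 < k' → v 2 = 0 → u 2 = 0) : u ∈ coordH 3 i := by
  rw [mem_coordH] at hv ⊢
  fin_cases i
  · exact h0 hik hv
  · exact h1 hik hv
  · exact h2 hik hv

lemma diffH_cases {i j : Fin 3} (hij : i < j) {ζ : ℂ} {v u : V3}
    (hv : v ∈ diffH 3 i j ζ)
    (h01 : v 0 = ζ * v 1 → u 0 = ζ * u 1)
    (h02 : v 0 = ζ * v 2 → u 0 = ζ * u 2)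
    (h12 : v 1 = ζ * v 2 → u 1 = ζ * u 2) : u ∈ diffH 3 i j ζ := by
  rw [mem_diffH] at hv ⊢
  fin_cases i <;> fin_cases j <;>
    first
      | exact absurd hij (by decide)
      | exact h01 hv
      | exact h02 hv
      | exact h12 hv

lemma classify (hr : 2 ≤ r) (hk1 : 1 ≤ k) (hk3 : k ≤ 3) {X : Submodule ℂ V3}
    (hX : X ∈ ArrLatIn ⊤ (interArr r 3 k)) (hdim : finrank ℂ X = 1) :
    X = span ℂ {![1,0,0]} ∨ X = span ℂ {![0,1,0]} ∨ X = span ℂ {![0,0,1]} ∨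
    (∃ c : ℂ, c ^ r = 1 ∧ c ≠ 0 ∧ X = span ℂ {![0,c,1]}) ∨
    (∃ b : ℂ, b ^ r = 1 ∧ b ≠ 0 ∧ 2 ≤ k ∧ X = span ℂ {![b,0,1]}) ∨
    (∃ a : ℂ, a ^ r = 1 ∧ a ≠ 0 ∧ k = 3 ∧ X = span ℂ {![a,1,0]}) ∨
    (∃ b c : ℂ, b ^ r = 1 ∧ c ^ r = 1 ∧ b ≠ 0 ∧ c ≠ 0 ∧ X = span ℂ {![b,c,1]}) := by
  obtain ⟨S, hSA, hXeq⟩ := mem_L_iff.1 hX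
  have hXbot : X ≠ ⊥ := by intro hb; rw [hb] at hdim; simp at hdim
  obtain ⟨v, hvX, hv0⟩ := Submodule.exists_mem_ne_zero_of_ne_bot hXbot
  have hXv : X = span ℂ {v} := by
    refine (Submodule.eq_of_le_of_finrank_le
      ((Submodule.span_singleton_le_iff_mem _ _).2 hvX) ?_).symm
    rw [hdim, finrank_span_singleton hv0]
  by_cases h2 : v 2 = 0
  · by_cases h1 : v 1 = 0
    · -- v along e0
      left
      have hv00 : v 0 ≠ 0 := by
        intro h0; apply hv0; funext i; fin_cases i <;> simp [h0, h1, h2]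
      have hv' : v = (v 0) • ![1,0,0] := by
        funext i; fin_cases i
        · show v 0 = v 0 * 1; rw [mul_one]
        · show v 1 = v 0 * 0; rw [mul_zero, h1]
        · show v 2 = v 0 * 0; rw [mul_zero, h2]
      rw [hXv, hv', Submodule.span_singleton_smul_eq (isUnit_iff_ne_zero.2 hv00) _]
    · -- v = v1 • (a,1,0)
      have hv' : v = (v 1) • ![v 0 / v 1, 1, 0] := by
        funext i; fin_cases i
        · show v 0 = v 1 * (v 0 / v 1); field_simp
        · show v 1 = v 1 * 1; rw [mul_one]
        · show v 2 = v 1 * 0; rw [mul_zero, h2]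
      set a := v 0 / v 1 with hadef
      have hw : X = span ℂ {![a,1,0]} := by
        rw [hXv, hv', Submodule.span_singleton_smul_eq (isUnit_iff_ne_zero.2 h1) _]
      have hsw : sInf S = span ℂ {![a,(1:ℂ),0]} := hXeq.symm.trans hw
      by_cases ha0 : a = 0
      · right; left; rw [hw, ha0]
      · have har : a ^ r = 1 := by
          by_contra har
          have hu : (![1,0,0] : V3) ∈ span ℂ {![a,(1:ℂ),0]} := by
            refine key_core hSA hsw ?_
            rintro H (⟨i, hik, rfl⟩ | ⟨i, j, hij, ζ, hζ, rfl⟩) hvH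
            · refine coordH_cases hik hvH ?_ ?_ ?_
              · exact fun _ h => absurd (by simpa using h) ha0
              · exact fun _ h => by exfalso; simpa using h
              · exact fun _ _ => by simp
            · have hζ0 : ζ ≠ 0 := root_ne_zero hζ hr
              refine diffH_cases hij hvH ?_ ?_ ?_
              · intro h; exfalso
                have haζ : a = ζ := by simpa using h
                exact har (by rw [haζ]; exact hζ)
              · intro h; exfalso; exact ha0 (by simpa using h)
              · intro h; exfalso; simpa using h
          rw [mem_span_a10] at hu
          simp at hu
        have hk3' : k = 3 := by
          by_contra hkk
          have hu : (![0,0,1] : V3) ∈ span ℂ {![a,(1:ℂ),0]} := by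
            refine key_core hSA hsw ?_
            rintro H (⟨i, hik, rfl⟩ | ⟨i, j, hij, ζ, hζ, rfl⟩) hvH
            · refine coordH_cases hik hvH ?_ ?_ ?_
              · exact fun _ h => absurd (by simpa using h) ha0
              · exact fun _ h => by exfalso; simpa using h
              · exact fun hk _ => by exfalso; omega
            · have hζ0 : ζ ≠ 0 := root_ne_zero hζ hr
              refine diffH_cases hij hvH ?_ ?_ ?_
              · intro _; simp
              · intro h; exfalso; exact ha0 (by simpa using h)
              · intro h; exfalso; simpa using h
          rw [mem_span_a10] at hu
          simp at hu
        exact Or.inr (Or.inr (Or.inr (Or.inr (Or.inr (Or.inl ⟨a, har, ha0, hk3', hw⟩)))))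
  · -- v 2 ≠ 0 : v = v2 • (b, c, 1)
    have hv' : v = (v 2) • ![v 0 / v 2, v 1 / v 2, 1] := by
      funext i; fin_cases i
      · show v 0 = v 2 * (v 0 / v 2); field_simp
      · show v 1 = v 2 * (v 1 / v 2); field_simp
      · show v 2 = v 2 * 1; rw [mul_one]
    set b := v 0 / v 2 with hbdef
    set c := v 1 / v 2 with hcdef
    have hw : X = span ℂ {![b,c,1]} := by
      rw [hXv, hv', Submodule.span_singleton_smul_eq (isUnit_iff_ne_zero.2 h2) _]
    have hsw : sInf S = span ℂ {![b,c,(1:ℂ)]} := hXeq.symm.trans hw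
    by_cases hb0 : b = 0
    · by_cases hc0 : c = 0
      · right; right; left; rw [hw, hb0, hc0]
      · have hcr : c ^ r = 1 := by
          by_contra hcr
          have hu : (![0,1,0] : V3) ∈ span ℂ {![b,c,(1:ℂ)]} := by
            refine key_core hSA hsw ?_
            rintro H (⟨i, hik, rfl⟩ | ⟨i, j, hij, ζ, hζ, rfl⟩) hvH
            · refine coordH_cases hik hvH ?_ ?_ ?_
              · exact fun _ _ => by simp
              · exact fun _ h => absurd (by simpa using h) hc0
              · exact fun _ h => by exfalso; simpa using h
            · have hζ0 : ζ ≠ 0 := root_ne_zero hζ hr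
              refine diffH_cases hij hvH ?_ ?_ ?_
              · intro h; exfalso
                rw [hb0] at h
                rcases (by simpa using h.symm : ζ = 0 ∨ c = 0) with h' | h'
                · exact hζ0 h'
                · exact hc0 h'
              · intro h; exfalso
                have : b = ζ := by simpa using h
                exact hζ0 (by rw [← this, hb0])
              · intro h; exfalso
                have : c = ζ := by simpa using h
                exact hcr (by rw [this]; exact hζ)
          rw [mem_span_ab1] at hu
          simp at hu
        right; right; right; left
        exact ⟨c, hcr, hc0, by rw [hw, hb0]⟩
    · by_cases hc0 : c = 0
      · have hbr : b ^ r = 1 := by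
          by_contra hbr
          have hu : (![1,0,0] : V3) ∈ span ℂ {![b,c,(1:ℂ)]} := by
            refine key_core hSA hsw ?_
            rintro H (⟨i, hik, rfl⟩ | ⟨i, j, hij, ζ, hζ, rfl⟩) hvH
            · refine coordH_cases hik hvH ?_ ?_ ?_
              · exact fun _ h => absurd (by simpa using h) hb0
              · exact fun _ _ => by simp
              · exact fun _ h => by exfalso; simpa using h
            · have hζ0 : ζ ≠ 0 := root_ne_zero hζ hr
              refine diffH_cases hij hvH ?_ ?_ ?_
              · intro h; exfalso
                simp only [hc0] at h
                simp at h
                exact hb0 h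
              · intro h; exfalso
                have : b = ζ := by simpa using h
                exact hbr (by rw [this]; exact hζ)
              · intro h; exfalso
                have : c = ζ := by simpa using h
                exact hζ0 (by rw [← this, hc0])
          rw [mem_span_ab1] at hu
          simp at hu
        have hk2 : 2 ≤ k := by
          by_contra hk2
          have hu : (![0,1,0] : V3) ∈ span ℂ {![b,c,(1:ℂ)]} := by
            refine key_core hSA hsw ?_
            rintro H (⟨i, hik, rfl⟩ | ⟨i, j, hij, ζ, hζ, rfl⟩) hvH
            · refine coordH_cases hik hvH ?_ ?_ ?_
              · exact fun _ h => absurd (by simpa using h) hb0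
              · exact fun hk _ => by exfalso; omega
              · exact fun hk _ => by exfalso; omega
            · have hζ0 : ζ ≠ 0 := root_ne_zero hζ hr
              refine diffH_cases hij hvH ?_ ?_ ?_
              · intro h; exfalso
                simp only [hc0] at h
                simp at h
                exact hb0 h
              · intro _; simp
              · intro h; exfalso
                have : c = ζ := by simpa using h
                exact hζ0 (by rw [← this, hc0])
          rw [mem_span_ab1] at hu
          simp at hu
        right; right; right; right; left
        exact ⟨b, hbr, hb0, hk2, by rw [hw, hc0]⟩
      · have hbc : b ^ r = 1 ∧ c ^ r = 1 := by
          by_cases hb : b ^ r = 1 <;> by_cases hc : c ^ r = 1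
          · exact ⟨hb, hc⟩
          · exfalso
            have hu : (![0,1,0] : V3) ∈ span ℂ {![b,c,(1:ℂ)]} := by
              refine key_core hSA hsw ?_
              rintro H (⟨i, hik, rfl⟩ | ⟨i, j, hij, ζ, hζ, rfl⟩) hvH
              · refine coordH_cases hik hvH ?_ ?_ ?_
                · exact fun _ h => absurd (by simpa using h) hb0
                · exact fun _ h => absurd (by simpa using h) hc0
                · exact fun _ h => by exfalso; simpa using h
              · have hζ0 : ζ ≠ 0 := root_ne_zero hζ hr
                refine diffH_cases hij hvH ?_ ?_ ?_
                · intro h; exfalso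
                  have h' : b = ζ * c := by simpa using h
                  apply hc
                  have hh : b ^ r = c ^ r := by rw [h', mul_pow, hζ, one_mul]
                  rw [← hh, hb]
                · intro _; simp
                · intro h; exfalso
                  have : c = ζ := by simpa using h
                  exact hc (by rw [this]; exact hζ)
            rw [mem_span_ab1] at hu
            simp at hu
          · exfalso
            have hu : (![1,0,0] : V3) ∈ span ℂ {![b,c,(1:ℂ)]} := by
              refine key_core hSA hsw ?_
              rintro H (⟨i, hik, rfl⟩ | ⟨i, j, hij, ζ, hζ, rfl⟩) hvH
              · refine coordH_cases hik hvH ?_ ?_ ?_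
                · exact fun _ h => absurd (by simpa using h) hb0
                · exact fun _ h => absurd (by simpa using h) hc0
                · exact fun _ h => by exfalso; simpa using h
              · have hζ0 : ζ ≠ 0 := root_ne_zero hζ hr
                refine diffH_cases hij hvH ?_ ?_ ?_
                · intro h; exfalso
                  have h' : b = ζ * c := by simpa using h
                  exact hb (by rw [h', mul_pow, hζ, one_mul, hc])
                · intro h; exfalso
                  have : b = ζ := by simpa using h
                  exact hb (by rw [this]; exact hζ)
                · intro _; simp
            rw [mem_span_ab1] at hu
            simp at hu
          · exfalso
            have hu : (![0,0,1] : V3) ∈ span ℂ {![b,c,(1:ℂ)]} := by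
              refine key_core hSA hsw ?_
              rintro H (⟨i, hik, rfl⟩ | ⟨i, j, hij, ζ, hζ, rfl⟩) hvH
              · refine coordH_cases hik hvH ?_ ?_ ?_
                · exact fun _ h => absurd (by simpa using h) hb0
                · exact fun _ h => absurd (by simpa using h) hc0
                · exact fun _ h => by exfalso; simpa using h
              · have hζ0 : ζ ≠ 0 := root_ne_zero hζ hr
                refine diffH_cases hij hvH ?_ ?_ ?_
                · intro _; simp
                · intro h; exfalso
                  have : b = ζ := by simpa using h
                  exact hb (by rw [this]; exact hζ)
                · intro h; exfalso
                  have : c = ζ := by simpa using h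
                  exact hc (by rw [this]; exact hζ)
            rw [mem_span_ab1] at hu
            simp at hu
            exact hb0 hu.1.symm
        right; right; right; right; right; right
        exact ⟨b, c, hbc.1, hbc.2, hb0, hc0, hw⟩

end Classify

section Helpers4
open Module
local notation "V3" => (Fin 3 → ℂ)
variable {r k : ℕ}

lemma exists_root_ne_one (hr : 2 ≤ r) : ∃ ζ : ℂ, ζ ^ r = 1 ∧ ζ ≠ 1 := by
  have h := Complex.isPrimitiveRoot_exp r (by omega)
  exact ⟨_, h.pow_eq_one, h.ne_one (by omega)⟩

lemma e0_mem_L (hr : 2 ≤ r) : span ℂ {![1,0,0]} ∈ ArrLatIn ⊤ (interArr r 3 k) := by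
  obtain ⟨ζ, hζ, hζ1⟩ := exists_root_ne_one hr
  rw [span_e0_eq (Ne.symm hζ1)]
  exact inf_mem_L (diffH_mem_A (by decide) (one_pow r)) (diffH_mem_A (by decide) hζ)

lemma e1_mem_L (hr : 2 ≤ r) : span ℂ {![0,1,0]} ∈ ArrLatIn ⊤ (interArr r 3 k) := by
  obtain ⟨ζ, hζ, hζ1⟩ := exists_root_ne_one hr
  rw [span_e1_eq (Ne.symm hζ1)]
  exact inf_mem_L (diffH_mem_A (by decide) (one_pow r)) (diffH_mem_A (by decide) hζ)

lemma e2_mem_L (hr : 2 ≤ r) : span ℂ {![0,0,1]} ∈ ArrLatIn ⊤ (interArr r 3 k) := by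
  obtain ⟨ζ, hζ, hζ1⟩ := exists_root_ne_one hr
  rw [span_e2_eq (Ne.symm hζ1)]
  exact inf_mem_L (diffH_mem_A (by decide) (one_pow r)) (diffH_mem_A (by decide) hζ)

lemma span_0c1_mem_L (hk1 : 1 ≤ k) {c : ℂ} (hc : c ^ r = 1) :
    span ℂ {![0,c,1]} ∈ ArrLatIn ⊤ (interArr r 3 k) := by
  rw [span_0b1_eq]
  exact inf_mem_L (coordH_mem_A 0 (by rw [Fin.val_zero]; omega)) (diffH_mem_A (by decide) hc)

lemma span_ab1_mem_L {a b : ℂ} (ha : a ^ r = 1) (hb : b ^ r = 1) :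
    span ℂ {![a,b,1]} ∈ ArrLatIn ⊤ (interArr r 3 k) := by
  rw [span_ab1_eq]
  exact inf_mem_L (diffH_mem_A (by decide) ha) (diffH_mem_A (by decide) hb)

lemma no_common (v w : V3)
    (hsup : span ℂ {v} ⊔ span ℂ {w} ∈ ArrLatIn ⊤ (interArr r 3 k))
    (hno : ∀ H ∈ interArr r 3 k, v ∈ H → w ∈ H → False) : False := by
  obtain ⟨S, hSA, hEq⟩ := mem_L_iff.1 hsup
  rcases Set.eq_empty_or_nonempty S with rfl | ⟨H, hH⟩
  · rw [sInf_empty] at hEq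
    have h2 := sup_le_two v w
    rw [hEq, finrank_top, finrank_V3] at h2
    omega
  · have hle : span ℂ {v} ⊔ span ℂ {w} ≤ H := hEq ▸ sInf_le hH
    exact hno H (hSA hH)
      (hle (le_sup_left (a := span ℂ {v}) (Submodule.mem_span_singleton_self v)))
      (hle (le_sup_right (b := span ℂ {w}) (Submodule.mem_span_singleton_self w)))

end Helpers4

section Forward
open Module
local notation "V3" => (Fin 3 → ℂ)
variable {r k : ℕ}

lemma forward (hr : 2 ≤ r) (hk1 : 1 ≤ k) (hk3 : k ≤ 3) {X : Submodule ℂ V3}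
    (hX : X ∈ ArrLatIn ⊤ (interArr r 3 k)) (hdim : finrank ℂ X = 1)
    (hmod : ModularIn (ArrLatIn ⊤ (interArr r 3 k)) X) :
    ∃ i j : Fin 3, i < j ∧ (i : ℕ) < k ∧ (j : ℕ) < k ∧ X = coordH 3 i ⊓ coordH 3 j := by
  obtain ⟨ζp, hζp, hζp1⟩ := exists_root_ne_one hr
  rcases classify hr hk1 hk3 hX hdim with hc | hc | hc | ⟨c, hcr, hc0, hc⟩ |
    ⟨b, hbr, hb0, hk2, hc⟩ | ⟨a, har, ha0, hkk, hc⟩ | ⟨b, c, hbr, hcr, hb0, hc0, hc⟩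
  · -- X = span e0 : fine iff k = 3, else contradiction with Y = span e1
    by_cases hk : k = 3
    · exact ⟨1, 2, by decide, by rw [Fin.val_one]; omega, by simp [hk], by rw [hc, axis0_eq]⟩
    · exfalso
      have hsup := hmod.2 _ (e1_mem_L hr)
      rw [hc] at hsup
      refine no_common _ _ hsup ?_
      rintro H (⟨i, hik, rfl⟩ | ⟨i, j, hij, ζ, hζ, rfl⟩) hv hw
      · rw [mem_coordH] at hv hw
        fin_cases i
        · simp at hv
        · simp at hw
        · simp at hik; omega
      · rw [mem_diffH] at hv hw
        fin_cases i <;> fin_cases j <;>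
          first
            | exact absurd hij (by decide)
            | (simp at hv; done)
            | (simp at hw; done)
  · -- X = span e1 : fine iff k = 3, else contradiction with Y = span e0
    by_cases hk : k = 3
    · exact ⟨0, 2, by decide, by rw [Fin.val_zero]; omega, by simp [hk], by rw [hc, axis1_eq]⟩
    · exfalso
      have hsup := hmod.2 _ (e0_mem_L hr)
      rw [hc] at hsup
      refine no_common _ _ hsup ?_
      rintro H (⟨i, hik, rfl⟩ | ⟨i, j, hij, ζ, hζ, rfl⟩) hv hw
      · rw [mem_coordH] at hv hw
        fin_cases i
        · simp at hw
        · simp at hv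
        · simp at hik; omega
      · rw [mem_diffH] at hv hw
        fin_cases i <;> fin_cases j <;>
          first
            | exact absurd hij (by decide)
            | (simp at hw; done)
            | (simp at hv; done)
  · -- X = span e2 : fine iff 2 ≤ k, else contradiction with Y = span e0
    by_cases hk : 2 ≤ k
    · exact ⟨0, 1, by decide, by rw [Fin.val_zero]; omega, by rw [Fin.val_one]; omega,
        by rw [hc, axis2_eq]⟩
    · exfalso
      have hsup := hmod.2 _ (e0_mem_L hr)
      rw [hc] at hsup
      refine no_common _ _ hsup ?_
      rintro H (⟨i, hik, rfl⟩ | ⟨i, j, hij, ζ, hζ, rfl⟩) hv hw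
      · rw [mem_coordH] at hv hw
        fin_cases i
        · simp at hw
        · simp at hik; omega
        · simp at hik; omega
      · have hζ0 : ζ ≠ 0 := root_ne_zero hζ hr
        rw [mem_diffH] at hv hw
        fin_cases i <;> fin_cases j <;>
          first
            | exact absurd hij (by decide)
            | (simp at hw; done)
            | (simp at hv; exact hζ0 hv.symm; done)
            | (simp at hv; exact hζ0 hv; done)
  · -- X = span (0,c,1) : contradiction with Y = span (1, ζp c, 1)
    exfalso
    have hY : span ℂ {![1, ζp * c, 1]} ∈ ArrLatIn ⊤ (interArr r 3 k) :=
      span_ab1_mem_L (one_pow r) (by rw [mul_pow, hζp, hcr, one_mul])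
    have hsup := hmod.2 _ hY
    rw [hc] at hsup
    refine no_common _ _ hsup ?_
    rintro H (⟨i, hik, rfl⟩ | ⟨i, j, hij, ζ, hζ, rfl⟩) hv hw
    · rw [mem_coordH] at hv hw
      fin_cases i
      · simp at hw
      · simp at hv; exact hc0 hv
      · simp at hv
    · have hζ0 : ζ ≠ 0 := root_ne_zero hζ hr
      rw [mem_diffH] at hv hw
      fin_cases i <;> fin_cases j
      · exact absurd hij (by decide)
      · -- (0,1): 0 = ζ * c
        simp at hv
        rcases hv with h | h
        · exact hζ0 h
        · exact hc0 h
      · -- (0,2): 0 = ζ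
        simp at hv
        exact hζ0 hv.symm
      · exact absurd hij (by decide)
      · exact absurd hij (by decide)
      · -- (1,2): c = ζ and ζp * c = ζ
        simp at hv hw
        rw [← hv] at hw
        exact hζp1 (mul_right_cancel₀ hc0 (hw.trans (one_mul c).symm))
      · exact absurd hij (by decide)
      · exact absurd hij (by decide)
      · exact absurd hij (by decide)
  · -- X = span (b,0,1) : contradiction with Y = span (ζp b, 1, 1)
    exfalso
    have hY : span ℂ {![ζp * b, 1, 1]} ∈ ArrLatIn ⊤ (interArr r 3 k) :=
      span_ab1_mem_L (by rw [mul_pow, hζp, hbr, one_mul]) (one_pow r)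
    have hsup := hmod.2 _ hY
    rw [hc] at hsup
    refine no_common _ _ hsup ?_
    rintro H (⟨i, hik, rfl⟩ | ⟨i, j, hij, ζ, hζ, rfl⟩) hv hw
    · rw [mem_coordH] at hv hw
      fin_cases i
      · simp at hv; exact hb0 hv
      · simp at hw
      · simp at hv
    · have hζ0 : ζ ≠ 0 := root_ne_zero hζ hr
      rw [mem_diffH] at hv hw
      fin_cases i <;> fin_cases j
      · exact absurd hij (by decide)
      · -- (0,1): b = ζ * 0
        simp at hv
        exact hb0 hv
      · -- (0,2): b = ζ and ζp * b = ζ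
        simp at hv hw
        rw [← hv] at hw
        exact hζp1 (mul_right_cancel₀ hb0 (hw.trans (one_mul b).symm))
      · exact absurd hij (by decide)
      · exact absurd hij (by decide)
      · -- (1,2): 0 = ζ
        simp at hv
        exact hζ0 hv.symm
      · exact absurd hij (by decide)
      · exact absurd hij (by decide)
      · exact absurd hij (by decide)
  · -- X = span (a,1,0) : contradiction with Y = span (0,1,1)
    exfalso
    have hY : span ℂ {![0,1,1]} ∈ ArrLatIn ⊤ (interArr r 3 k) :=
      span_0c1_mem_L hk1 (one_pow r)
    have hsup := hmod.2 _ hY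
    rw [hc] at hsup
    refine no_common _ _ hsup ?_
    rintro H (⟨i, hik, rfl⟩ | ⟨i, j, hij, ζ, hζ, rfl⟩) hv hw
    · rw [mem_coordH] at hv hw
      fin_cases i
      · simp at hv; exact ha0 hv
      · simp at hv
      · simp at hw
    · have hζ0 : ζ ≠ 0 := root_ne_zero hζ hr
      rw [mem_diffH] at hv hw
      fin_cases i <;> fin_cases j
      · exact absurd hij (by decide)
      · -- (0,1): w : 0 = ζ * 1
        simp at hw
        exact hζ0 hw.symm
      · -- (0,2): v : a = ζ * 0
        simp at hv
        exact ha0 hv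
      · exact absurd hij (by decide)
      · exact absurd hij (by decide)
      · -- (1,2): v : 1 = ζ * 0
        simp at hv
      · exact absurd hij (by decide)
      · exact absurd hij (by decide)
      · exact absurd hij (by decide)
  · -- X = span (b,c,1) : contradiction with Y = span (0, ζp c, 1)
    exfalso
    have hY : span ℂ {![0, ζp * c, 1]} ∈ ArrLatIn ⊤ (interArr r 3 k) :=
      span_0c1_mem_L hk1 (by rw [mul_pow, hζp, hcr, one_mul])
    have hsup := hmod.2 _ hY
    rw [hc] at hsup
    refine no_common _ _ hsup ?_
    rintro H (⟨i, hik, rfl⟩ | ⟨i, j, hij, ζ, hζ, rfl⟩) hv hw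
    · rw [mem_coordH] at hv hw
      fin_cases i
      · simp at hv; exact hb0 hv
      · simp at hv; exact hc0 hv
      · simp at hv
    · have hζ0 : ζ ≠ 0 := root_ne_zero hζ hr
      have hζp0 : ζp ≠ 0 := root_ne_zero hζp hr
      rw [mem_diffH] at hv hw
      fin_cases i <;> fin_cases j
      · exact absurd hij (by decide)
      · -- (0,1): w : 0 = ζ * (ζp * c)
        simp at hw
        rcases hw with h | h | h
        · exact hζ0 h
        · exact hζp0 h
        · exact hc0 h
      · -- (0,2): w : 0 = ζ
        simp at hw
        exact hζ0 hw.symm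
      · exact absurd hij (by decide)
      · exact absurd hij (by decide)
      · -- (1,2): v : c = ζ, w : ζp * c = ζ
        simp at hv hw
        rw [← hv] at hw
        exact hζp1 (mul_right_cancel₀ hc0 (hw.trans (one_mul c).symm))
      · exact absurd hij (by decide)
      · exact absurd hij (by decide)
      · exact absurd hij (by decide)

end Forward

section Backward
open Module
local notation "V3" => (Fin 3 → ℂ)
variable {r k : ℕ}

lemma e0_ne : (![1,0,0] : V3) ≠ 0 := by
  intro h; have := congrFun h 0; norm_num at this

lemma e1_ne : (![0,1,0] : V3) ≠ 0 := by
  intro h; have := congrFun h 1; norm_num at this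

lemma e2_ne : (![0,0,1] : V3) ≠ 0 := by
  intro h; have := congrFun h 2; simp at this

lemma dim2_hyp {Y : Submodule ℂ V3} (hY : Y ∈ ArrLatIn ⊤ (interArr r 3 k))
    (h2 : finrank ℂ Y = 2) : Y ∈ interArr r 3 k := by
  obtain ⟨S, hSA, hEq⟩ := mem_L_iff.1 hY
  rcases Set.eq_empty_or_nonempty S with rfl | ⟨H, hH⟩
  · rw [sInf_empty] at hEq
    rw [hEq, finrank_top, finrank_V3] at h2
    omega
  · have hle : Y ≤ H := hEq ▸ sInf_le hH
    have hH2 : finrank ℂ H = 2 := by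
      rcases hSA hH with ⟨i, _, rfl⟩ | ⟨i, j, hij, ζ, _, rfl⟩
      · exact finrank_coordH i
      · exact finrank_diffH (ne_of_lt hij) ζ
    have hYH : Y = H := Submodule.eq_of_le_of_finrank_le hle (by rw [h2, hH2])
    rw [hYH]
    exact hSA hH

lemma modular_of (hr : 2 ≤ r) {v : V3} (hv0 : v ≠ 0)
    (hXL : span ℂ {v} ∈ ArrLatIn ⊤ (interArr r 3 k))
    (h1 : ∀ Y ∈ ArrLatIn ⊤ (interArr r 3 k), finrank ℂ Y = 1 →
      span ℂ {v} ⊔ Y ∈ ArrLatIn ⊤ (interArr r 3 k)) :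
    ModularIn (ArrLatIn ⊤ (interArr r 3 k)) (span ℂ {v}) := by
  refine ⟨hXL, fun Y hY => ?_⟩
  have hle3 : finrank ℂ Y ≤ 3 := by
    have := Submodule.finrank_le Y
    rwa [finrank_V3] at this
  have h04 : finrank ℂ Y = 0 ∨ finrank ℂ Y = 1 ∨ finrank ℂ Y = 2 ∨ finrank ℂ Y = 3 := by
    omega
  rcases h04 with h | h | h | h
  · rw [Submodule.finrank_eq_zero.1 h, sup_bot_eq]; exact hXL
  · exact h1 Y hY h
  · have hA := dim2_hyp hY h
    by_cases hXY : span ℂ {v} ≤ Y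
    · rw [sup_eq_right.2 hXY]; exact mem_L_of_A hA
    · have hlt : span ℂ {v} ⊓ Y < span ℂ {v} :=
        lt_of_le_of_ne inf_le_left (fun hh => hXY (inf_eq_left.1 hh))
      have hltr := Submodule.finrank_lt_finrank_of_lt hlt
      have hs := Submodule.finrank_sup_add_finrank_inf_eq (span ℂ {v}) Y
      rw [finrank_span_singleton hv0] at hltr hs
      have hfr : finrank ℂ (span ℂ {v} ⊔ Y : Submodule ℂ V3) = 3 := by omega
      have htop : span ℂ {v} ⊔ Y = ⊤ :=
        Submodule.eq_top_of_finrank_eq (by rw [hfr, finrank_V3])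
      rw [htop]
      exact top_mem_L
  · have htop : Y = ⊤ := Submodule.eq_top_of_finrank_eq (by rw [h, finrank_V3])
    rw [htop, sup_top_eq]
    exact top_mem_L

lemma axis2_modular (hr : 2 ≤ r) (hk1 : 1 ≤ k) (hk3 : k ≤ 3) (hk2 : 2 ≤ k) :
    ModularIn (ArrLatIn ⊤ (interArr r 3 k)) (span ℂ {![0,0,1]}) := by
  refine modular_of hr e2_ne (e2_mem_L hr) ?_
  intro Y hY h1
  rcases classify hr hk1 hk3 hY h1 with hc | hc | hc | ⟨c, hcr, hc0, hc⟩ |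
    ⟨b, hbr, hb0, _, hc⟩ | ⟨a, har, ha0, _, hc⟩ | ⟨b, c, hbr, hcr, hb0, hc0, hc⟩
  · rw [hc, sup_eq_hyp (by simp [mem_coordH]) (by simp [mem_coordH]) (finrank_coordH 1)
      (show (![0,0,1] : V3) 2 * (![1,0,0] : V3) 0 ≠ (![0,0,1] : V3) 0 * (![1,0,0] : V3) 2
        by simp)]
    exact mem_L_of_A (coordH_mem_A 1 (by rw [Fin.val_one]; omega))
  · rw [hc, sup_eq_hyp (by simp [mem_coordH]) (by simp [mem_coordH]) (finrank_coordH 0)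
      (show (![0,0,1] : V3) 2 * (![0,1,0] : V3) 1 ≠ (![0,0,1] : V3) 1 * (![0,1,0] : V3) 2
        by simp)]
    exact mem_L_of_A (coordH_mem_A 0 (by rw [Fin.val_zero]; omega))
  · rw [hc, sup_idem]
    exact e2_mem_L hr
  · rw [hc, sup_eq_hyp (by simp [mem_coordH]) (by simp [mem_coordH]) (finrank_coordH 0)
      (show (![0,0,1] : V3) 2 * (![0,c,1] : V3) 1 ≠ (![0,0,1] : V3) 1 * (![0,c,1] : V3) 2
        by simpa using hc0)]
    exact mem_L_of_A (coordH_mem_A 0 (by rw [Fin.val_zero]; omega))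
  · rw [hc, sup_eq_hyp (by simp [mem_coordH]) (by simp [mem_coordH]) (finrank_coordH 1)
      (show (![0,0,1] : V3) 2 * (![b,0,1] : V3) 0 ≠ (![0,0,1] : V3) 0 * (![b,0,1] : V3) 2
        by simpa using hb0)]
    exact mem_L_of_A (coordH_mem_A 1 (by rw [Fin.val_one]; omega))
  · rw [hc, sup_eq_hyp (H := diffH 3 0 1 a) (i := 2) (j := 1)
      (by simp [mem_diffH]) (by simp [mem_diffH])
      (finrank_diffH (by decide) a)
      (show (![0,0,1] : V3) 2 * (![a,1,0] : V3) 1 ≠ (![0,0,1] : V3) 1 * (![a,1,0] : V3) 2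
        by simp)]
    exact mem_L_of_A (diffH_mem_A (by decide) har)
  · rw [hc, sup_eq_hyp (H := diffH 3 0 1 (b * c⁻¹)) (i := 2) (j := 0)
      (by simp [mem_diffH])
      (show (![b,c,1] : V3) ∈ diffH 3 0 1 (b * c⁻¹) by
        rw [mem_diffH]; simp; field_simp)
      (finrank_diffH (by decide) (b * c⁻¹))
      (show (![0,0,1] : V3) 2 * (![b,c,1] : V3) 0 ≠ (![0,0,1] : V3) 0 * (![b,c,1] : V3) 2
        by simpa using hb0)]
    exact mem_L_of_A (diffH_mem_A (by decide)
      (by rw [mul_pow, inv_pow, hbr, hcr]; norm_num))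

lemma axis1_modular (hr : 2 ≤ r) (hk1 : 1 ≤ k) (hk3 : k ≤ 3) (hkk : 2 < k) :
    ModularIn (ArrLatIn ⊤ (interArr r 3 k)) (span ℂ {![0,1,0]}) := by
  refine modular_of hr e1_ne (e1_mem_L hr) ?_
  intro Y hY h1
  rcases classify hr hk1 hk3 hY h1 with hc | hc | hc | ⟨c, hcr, hc0, hc⟩ |
    ⟨b, hbr, hb0, _, hc⟩ | ⟨a, har, ha0, _, hc⟩ | ⟨b, c, hbr, hcr, hb0, hc0, hc⟩
  · rw [hc, sup_eq_hyp (by simp [mem_coordH]) (by simp [mem_coordH]) (finrank_coordH 2)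
      (show (![0,1,0] : V3) 1 * (![1,0,0] : V3) 0 ≠ (![0,1,0] : V3) 0 * (![1,0,0] : V3) 1
        by norm_num)]
    exact mem_L_of_A (coordH_mem_A 2 (by simpa using hkk))
  · rw [hc, sup_idem]
    exact e1_mem_L hr
  · rw [hc, sup_eq_hyp (by simp [mem_coordH]) (by simp [mem_coordH]) (finrank_coordH 0)
      (show (![0,1,0] : V3) 1 * (![0,0,1] : V3) 2 ≠ (![0,1,0] : V3) 2 * (![0,0,1] : V3) 1
        by simp)]
    exact mem_L_of_A (coordH_mem_A 0 (by rw [Fin.val_zero]; omega))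
  · rw [hc, sup_eq_hyp (by simp [mem_coordH]) (by simp [mem_coordH]) (finrank_coordH 0)
      (show (![0,1,0] : V3) 1 * (![0,c,1] : V3) 2 ≠ (![0,1,0] : V3) 2 * (![0,c,1] : V3) 1
        by simp)]
    exact mem_L_of_A (coordH_mem_A 0 (by rw [Fin.val_zero]; omega))
  · rw [hc, sup_eq_hyp (H := diffH 3 0 2 b) (i := 1) (j := 2)
      (by simp [mem_diffH]) (by simp [mem_diffH])
      (finrank_diffH (by decide) b)
      (show (![0,1,0] : V3) 1 * (![b,0,1] : V3) 2 ≠ (![0,1,0] : V3) 2 * (![b,0,1] : V3) 1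
        by simp)]
    exact mem_L_of_A (diffH_mem_A (by decide) hbr)
  · rw [hc, sup_eq_hyp (by simp [mem_coordH]) (by simp [mem_coordH]) (finrank_coordH 2)
      (show (![0,1,0] : V3) 1 * (![a,1,0] : V3) 0 ≠ (![0,1,0] : V3) 0 * (![a,1,0] : V3) 1
        by simpa using ha0)]
    exact mem_L_of_A (coordH_mem_A 2 (by simpa using hkk))
  · rw [hc, sup_eq_hyp (H := diffH 3 0 2 b) (i := 1) (j := 2)
      (by simp [mem_diffH]) (by simp [mem_diffH])
      (finrank_diffH (by decide) b)
      (show (![0,1,0] : V3) 1 * (![b,c,1] : V3) 2 ≠ (![0,1,0] : V3) 2 * (![b,c,1] : V3) 1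
        by simp)]
    exact mem_L_of_A (diffH_mem_A (by decide) hbr)

lemma axis0_modular (hr : 2 ≤ r) (hk1 : 1 ≤ k) (hk3 : k ≤ 3) (hkk : 2 < k) :
    ModularIn (ArrLatIn ⊤ (interArr r 3 k)) (span ℂ {![1,0,0]}) := by
  refine modular_of hr e0_ne (e0_mem_L hr) ?_
  intro Y hY h1
  rcases classify hr hk1 hk3 hY h1 with hc | hc | hc | ⟨c, hcr, hc0, hc⟩ |
    ⟨b, hbr, hb0, _, hc⟩ | ⟨a, har, ha0, _, hc⟩ | ⟨b, c, hbr, hcr, hb0, hc0, hc⟩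
  · rw [hc, sup_idem]
    exact e0_mem_L hr
  · rw [hc, sup_eq_hyp (by simp [mem_coordH]) (by simp [mem_coordH]) (finrank_coordH 2)
      (show (![1,0,0] : V3) 0 * (![0,1,0] : V3) 1 ≠ (![1,0,0] : V3) 1 * (![0,1,0] : V3) 0
        by norm_num)]
    exact mem_L_of_A (coordH_mem_A 2 (by simpa using hkk))
  · rw [hc, sup_eq_hyp (by simp [mem_coordH]) (by simp [mem_coordH]) (finrank_coordH 1)
      (show (![1,0,0] : V3) 0 * (![0,0,1] : V3) 2 ≠ (![1,0,0] : V3) 2 * (![0,0,1] : V3) 0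
        by simp)]
    exact mem_L_of_A (coordH_mem_A 1 (by rw [Fin.val_one]; omega))
  · rw [hc, sup_eq_hyp (H := diffH 3 1 2 c) (i := 0) (j := 2)
      (by simp [mem_diffH]) (by simp [mem_diffH])
      (finrank_diffH (by decide) c)
      (show (![1,0,0] : V3) 0 * (![0,c,1] : V3) 2 ≠ (![1,0,0] : V3) 2 * (![0,c,1] : V3) 0
        by simp)]
    exact mem_L_of_A (diffH_mem_A (by decide) hcr)
  · rw [hc, sup_eq_hyp (by simp [mem_coordH]) (by simp [mem_coordH]) (finrank_coordH 1)
      (show (![1,0,0] : V3) 0 * (![b,0,1] : V3) 2 ≠ (![1,0,0] : V3) 2 * (![b,0,1] : V3) 0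
        by simp)]
    exact mem_L_of_A (coordH_mem_A 1 (by rw [Fin.val_one]; omega))
  · rw [hc, sup_eq_hyp (by simp [mem_coordH]) (by simp [mem_coordH]) (finrank_coordH 2)
      (show (![1,0,0] : V3) 0 * (![a,1,0] : V3) 1 ≠ (![1,0,0] : V3) 1 * (![a,1,0] : V3) 0
        by norm_num)]
    exact mem_L_of_A (coordH_mem_A 2 (by simpa using hkk))
  · rw [hc, sup_eq_hyp (H := diffH 3 1 2 c) (i := 0) (j := 2)
      (by simp [mem_diffH]) (by simp [mem_diffH])
      (finrank_diffH (by decide) c)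
      (show (![1,0,0] : V3) 0 * (![b,c,1] : V3) 2 ≠ (![1,0,0] : V3) 2 * (![b,c,1] : V3) 0
        by simp)]
    exact mem_L_of_A (diffH_mem_A (by decide) hcr)

end Backward

/-- In `A = A^k_3(r)` with `1 ≤ k ≤ 3`, `r ≥ 2`, a dimension-1 element `X ∈ L(A)`
is modular iff `X = H_i ∩ H_j` for some coordinate hyperplanes `H_i, H_j` with `i < j ≤ k`. -/
theorem stmt_8 (r k : ℕ) (hr : 2 ≤ r) (hk1 : 1 ≤ k) (hk3 : k ≤ 3)
    (X : Submodule ℂ (Fin 3 → ℂ)) (hX : X ∈ ArrLatIn ⊤ (interArr r 3 k))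
    (hdim : Module.finrank ℂ ↥X = 1) :
    ModularIn (ArrLatIn ⊤ (interArr r 3 k)) X ↔
      ∃ i j : Fin 3, i < j ∧ (i : ℕ) < k ∧ (j : ℕ) < k ∧ X = coordH 3 i ⊓ coordH 3 j := by
  constructor
  · exact forward hr hk1 hk3 hX hdim
  · rintro ⟨i, j, hij, hik, hjk, hXeq⟩
    subst hXeq
    have hjk' : (j : ℕ) < k := hjk
    fin_cases i <;> fin_cases j <;>
      first
        | exact absurd hij (by decide)
        | exact show ModularIn (ArrLatIn ⊤ (interArr r 3 k)) (coordH 3 0 ⊓ coordH 3 1) by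
            rw [axis2_eq]; exact axis2_modular hr hk1 hk3 (by simp at hjk'; omega)
        | exact show ModularIn (ArrLatIn ⊤ (interArr r 3 k)) (coordH 3 0 ⊓ coordH 3 2) by
            rw [axis1_eq]; exact axis1_modular hr hk1 hk3 (by simp at hjk'; omega)
        | exact show ModularIn (ArrLatIn ⊤ (interArr r 3 k)) (coordH 3 1 ⊓ coordH 3 2) by
            rw [axis0_eq]; exact axis0_modular hr hk1 hk3 (by simp at hjk'; omega)
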